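/- For every finite family H_1, …, H_m of affine hyperplanes in ℝ^d, the number of connected components of the complement ℝ^d ∖ (H_1 ∪ ⋯ ∪ H_m) is at most ∑_{i=0}^{d} C(m, i), where C(m, i) denotes the binomial coefficient. -/

import Mathlib

/-- An affine hyperplane in ℝ^d: a set of the form {x : ⟨w,x⟩ = c} with w ≠ 0. -/
def IsHyperplane {d : ℕ} (H : Set (Fin d → ℝ)) : Prop :=
  ∃ w : Fin d → ℝ, w ≠ 0 ∧ ∃ c : ℝ, H = {x | ∑ i, w i * x i = c}

/-- The set of connected components of a subset `S` of a topological space. -/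
def components {X : Type*} [TopologicalSpace X] (S : Set X) : Set (Set X) :=
  {C | ∃ x ∈ S, C = connectedComponentIn S x}

/-- The number of chambers of an arrangement of `m` hyperplanes in ℝ^d is at most
`∑_{i=0}^d C(m,i)`. -/
theorem num_chambers_le (d m : ℕ) (H : Fin m → Set (Fin d → ℝ))
    (hH : ∀ i, IsHyperplane (H i)) :
    (components ((⋃ i, H i)ᶜ)).Finite ∧
      (components ((⋃ i, H i)ᶜ)).ncard ≤ ∑ i ∈ Finset.range (d + 1), m.choose i := by
  classical
  choose w hw c hc using hH
  set S : Set (Fin d → ℝ) := (⋃ i, H i)ᶜ with hSdef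
  set f : Fin m → (Fin d → ℝ) → ℝ := fun i x => (∑ j, w i j * x j) - c i with hf
  have hmemH : ∀ i y, y ∈ H i ↔ f i y = 0 := by
    intro i y
    rw [hc i]
    simp [hf, sub_eq_zero]
  have hmem : ∀ y, y ∈ S ↔ ∀ i, f i y ≠ 0 := by
    intro y
    simp [hSdef, Set.mem_compl_iff, Set.mem_iUnion, hmemH]
  have hcont : ∀ i, Continuous (f i) :=
    fun i => (continuous_finset_sum _ fun j _ =>
      continuous_const.mul (continuous_apply j)).sub continuous_const
  have haff : ∀ i (a b : ℝ) (y z : Fin d → ℝ), a + b = 1 →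
      f i (a • y + b • z) = a * f i y + b * f i z := by
    intro i a b y z hab
    have h1 : ∑ j, w i j * (a • y + b • z) j
        = a * (∑ j, w i j * y j) + b * (∑ j, w i j * z j) := by
      rw [Finset.mul_sum, Finset.mul_sum, ← Finset.sum_add_distrib]
      refine Finset.sum_congr rfl fun j _ => ?_
      simp only [Pi.add_apply, Pi.smul_apply, smul_eq_mul]
      ring
    simp only [hf, h1]
    linear_combination (c i) * hab
  -- sign vector
  set σ : (Fin d → ℝ) → Finset (Fin m) :=
    fun y => Finset.univ.filter (fun i => 0 < f i y) with hσdef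
  have hmemσ : ∀ y i, i ∈ σ y ↔ 0 < f i y := by
    intro y i; simp [hσdef]
  have sign_iff : ∀ {p q : ℝ}, 0 < p * q → (0 < q ↔ 0 < p) := by
    intro p q h
    rcases mul_pos_iff.1 h with ⟨h1, h2⟩ | ⟨h1, h2⟩ <;>
      constructor <;> intro h3 <;> first | assumption | linarith
  -- the "same sign chamber" of a point
  set T : (Fin d → ℝ) → Set (Fin d → ℝ) :=
    fun x => {y | ∀ i, 0 < f i x * f i y} with hTdef
  have hTconv : ∀ x, Convex ℝ (T x) := by
    intro x y hy z hz a b ha hb hab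
    intro i
    have h1 := hy i
    have h2 := hz i
    have h3 : f i x * f i (a • y + b • z) = a * (f i x * f i y) + b * (f i x * f i z) := by
      rw [haff i a b y z hab]; ring
    rw [h3]
    rcases eq_or_lt_of_le ha with h | h
    · have hb1 : b = 1 := by linarith
      simp [← h, hb1, h2]
    · have : 0 ≤ b * (f i x * f i z) := mul_nonneg hb h2.le
      nlinarith
  have hTS : ∀ x, T x ⊆ S := by
    intro x y hy
    rw [hmem]
    intro i h0
    have := hy i
    rw [h0, mul_zero] at this
    exact lt_irrefl 0 this
  have hTfib : ∀ x ∈ S, T x = {y | y ∈ S ∧ σ y = σ x} := by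
    intro x hx
    ext y
    constructor
    · intro hy
      refine ⟨hTS x hy, ?_⟩
      ext i
      rw [hmemσ, hmemσ]
      have h := sign_iff (hy i)
      have h2 := sign_iff (mul_pos_iff.1 (hy i) |> fun _ => hy i)
      constructor
      · intro h3; exact (sign_iff (hy i)).1 h3
      · intro h3
        rcases mul_pos_iff.1 (hy i) with ⟨_, h5⟩ | ⟨h4, _⟩
        · exact h5
        · linarith
    · rintro ⟨hyS, hσeq⟩ i
      have hiff : (0 < f i y) ↔ (0 < f i x) := by
        rw [← hmemσ, ← hmemσ, hσeq]
      have hfy := (hmem y).1 hyS i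
      have hfx := (hmem x).1 hx i
      rcases hfx.lt_or_gt with h | h
      · have : f i y < 0 := by
          rcases hfy.lt_or_gt with h' | h'
          · exact h'
          · exact absurd (hiff.1 h') (by linarith)
        exact mul_pos_of_neg_of_neg h this
      · exact mul_pos h (hiff.2 h)
  have hcomp : ∀ x ∈ S, connectedComponentIn S x = {y | y ∈ S ∧ σ y = σ x} := by
    intro x hx
    rw [← hTfib x hx]
    apply le_antisymm
    · -- component ⊆ T x
      intro y hy i
      have hCpre : IsPreconnected (connectedComponentIn S x) :=
        isPreconnected_connectedComponentIn
      have hCS : connectedComponentIn S x ⊆ S := connectedComponentIn_subset S x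
      have hopen1 : IsOpen {z : Fin d → ℝ | 0 < f i z} :=
        isOpen_lt continuous_const (hcont i)
      have hopen2 : IsOpen {z : Fin d → ℝ | f i z < 0} :=
        isOpen_lt (hcont i) continuous_const
      have hdisj : Disjoint {z : Fin d → ℝ | 0 < f i z} {z : Fin d → ℝ | f i z < 0} := by
        rw [Set.disjoint_left]
        intro z h1 h2
        simp only [Set.mem_setOf_eq] at h1 h2
        linarith
      have hcover : connectedComponentIn S x ⊆
          {z : Fin d → ℝ | 0 < f i z} ∪ {z : Fin d → ℝ | f i z < 0} := by
        intro z hz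
        rcases ((hmem z).1 (hCS hz) i).lt_or_gt with h | h
        · exact Or.inr h
        · exact Or.inl h
      have hxC : x ∈ connectedComponentIn S x := mem_connectedComponentIn hx
      rcases hCpre.subset_or_subset hopen1 hopen2 hdisj hcover with h | h
      · exact mul_pos (h hxC) (h hy)
      · exact mul_pos_of_neg_of_neg (h hxC) (h hy)
    · -- T x ⊆ component
      have hxT : x ∈ T x := by
        intro i
        exact mul_self_pos.2 ((hmem x).1 hx i)
      exact (hTconv x).isPreconnected.subset_connectedComponentIn hxT (hTS x)
  -- components are fibers of σ
  have hcompeq : components S = (fun B => {y | y ∈ S ∧ σ y = B}) '' (σ '' S) := by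
    ext C
    constructor
    · rintro ⟨x, hx, rfl⟩
      exact ⟨σ x, ⟨x, hx, rfl⟩, (hcomp x hx).symm⟩
    · rintro ⟨B, ⟨x, hx, rfl⟩, rfl⟩
      exact ⟨x, hx, (hcomp x hx).symm⟩
  have himgfin : (σ '' S).Finite := Set.toFinite _
  -- the family of realized sign vectors
  set 𝒜 : Finset (Finset (Fin m)) := himgfin.toFinset with h𝒜def
  have hmem𝒜 : ∀ u, u ∈ 𝒜 ↔ ∃ x ∈ S, σ x = u := by
    intro u
    rw [h𝒜def, Set.Finite.mem_toFinset]
    exact Set.mem_image σ S u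
  -- VC dimension bound
  have hvc : 𝒜.vcDim ≤ d := by
    apply Finset.sup_le
    intro s hs
    rw [Finset.mem_shatterer] at hs
    by_contra hcard
    push_neg at hcard
    -- linear dependence among the normals indexed by s
    have hnli : ¬ LinearIndependent ℝ (fun i : s => w i) := by
      intro hli
      have := hli.fintype_card_le_finrank
      rw [Module.finrank_fin_fun, Fintype.card_coe] at this
      omega
    obtain ⟨g, hg0, i0, hgi0⟩ := Fintype.not_linearIndependent_iff.1 hnli
    set a : Fin m → ℝ := fun i => if h : i ∈ s then g ⟨i, h⟩ else 0 with hadef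
    have ha_i0 : a (i0 : Fin m) ≠ 0 := by
      rw [hadef]
      simp only [dif_pos i0.2]
      exact hgi0
    have hsum0 : ∀ j, ∑ i ∈ s, a i * w i j = 0 := by
      intro j
      have h1 := congrFun hg0 j
      rw [Finset.sum_apply] at h1
      simp only [Pi.smul_apply, smul_eq_mul, Pi.zero_apply] at h1
      rw [← Finset.sum_attach s (fun i => a i * w i j)]
      have h2 : ∑ x ∈ s.attach, a ↑x * w ↑x j = ∑ x ∈ s.attach, g x * w ↑x j :=
        Finset.sum_congr rfl fun x _ => by rw [hadef]; simp only [dif_pos x.2]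
      rw [h2, Finset.attach_eq_univ]
      exact h1
    have hconst : ∀ x0 : Fin d → ℝ,
        ∑ i ∈ s, a i * f i x0 = - ∑ i ∈ s, a i * c i := by
      intro x0
      have h2 : ∑ i ∈ s, ∑ j, a i * (w i j * x0 j) = 0 := by
        rw [Finset.sum_comm]
        refine Finset.sum_eq_zero fun j _ => ?_
        have h3 : ∑ i ∈ s, a i * (w i j * x0 j) = (∑ i ∈ s, a i * w i j) * x0 j := by
          rw [Finset.sum_mul]
          exact Finset.sum_congr rfl fun i _ => by ring
        rw [h3, hsum0 j, zero_mul]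
      calc ∑ i ∈ s, a i * f i x0
          = ∑ i ∈ s, ((∑ j, a i * (w i j * x0 j)) - a i * c i) := by
            refine Finset.sum_congr rfl fun i _ => ?_
            simp only [hf]
            rw [mul_sub, Finset.mul_sum]
        _ = (∑ i ∈ s, ∑ j, a i * (w i j * x0 j)) - ∑ i ∈ s, a i * c i :=
            Finset.sum_sub_distrib _ _
        _ = - ∑ i ∈ s, a i * c i := by rw [h2, zero_sub]
    -- first realized pattern: positive coefficients
    obtain ⟨u1, hu1𝒜, hu1⟩ := hs (Finset.filter_subset (fun i => 0 < a i) s)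
    obtain ⟨x1, hx1S, hσx1⟩ := (hmem𝒜 u1).1 hu1𝒜
    rw [← hσx1] at hu1
    have hiff1 : ∀ i ∈ s, (0 < f i x1 ↔ 0 < a i) := by
      intro i hi
      have := Finset.ext_iff.1 hu1 i
      simp only [Finset.mem_inter, Finset.mem_filter, hmemσ, hi, true_and,
        Finset.mem_univ] at this
      exact this
    -- second realized pattern: negative coefficients
    obtain ⟨u2, hu2𝒜, hu2⟩ := hs (Finset.filter_subset (fun i => a i < 0) s)
    obtain ⟨x2, hx2S, hσx2⟩ := (hmem𝒜 u2).1 hu2𝒜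
    rw [← hσx2] at hu2
    have hiff2 : ∀ i ∈ s, (0 < f i x2 ↔ a i < 0) := by
      intro i hi
      have := Finset.ext_iff.1 hu2 i
      simp only [Finset.mem_inter, Finset.mem_filter, hmemσ, hi, true_and,
        Finset.mem_univ] at this
      exact this
    have hpos : 0 < ∑ i ∈ s, a i * f i x1 := by
      apply Finset.sum_pos'
      · intro i hi
        rcases lt_trichotomy (a i) 0 with h | h | h
        · have hfx : f i x1 < 0 := by
            rcases ((hmem x1).1 hx1S i).lt_or_gt with h' | h'
            · exact h'
            · exact absurd ((hiff1 i hi).1 h') (by linarith)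
          exact le_of_lt (mul_pos_of_neg_of_neg h hfx)
        · rw [h, zero_mul]
        · exact le_of_lt (mul_pos h ((hiff1 i hi).2 h))
      · refine ⟨i0, i0.2, ?_⟩
        rcases ha_i0.lt_or_gt with h | h
        · have hfx : f i0 x1 < 0 := by
            rcases ((hmem x1).1 hx1S i0).lt_or_gt with h' | h'
            · exact h'
            · exact absurd ((hiff1 i0 i0.2).1 h') (by linarith)
          exact mul_pos_of_neg_of_neg h hfx
        · exact mul_pos h ((hiff1 i0 i0.2).2 h)
    have hneg : ∑ i ∈ s, a i * f i x2 < 0 := by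
      have h1 : ∀ i ∈ s, a i * f i x2 ≤ 0 := by
        intro i hi
        rcases lt_trichotomy (a i) 0 with h | h | h
        · exact le_of_lt (mul_neg_of_neg_of_pos h ((hiff2 i hi).2 h))
        · rw [h, zero_mul]
        · have hfx : f i x2 < 0 := by
            rcases ((hmem x2).1 hx2S i).lt_or_gt with h' | h'
            · exact h'
            · exact absurd ((hiff2 i hi).1 h') (by linarith)
          exact le_of_lt (mul_neg_of_pos_of_neg h hfx)
      have h2 : a (i0 : Fin m) * f i0 x2 < 0 := by
        rcases ha_i0.lt_or_gt with h | h
        · exact mul_neg_of_neg_of_pos h ((hiff2 i0 i0.2).2 h)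
        · have hfx : f i0 x2 < 0 := by
            rcases ((hmem x2).1 hx2S i0).lt_or_gt with h' | h'
            · exact h'
            · exact absurd ((hiff2 i0 i0.2).1 h') (by linarith)
          exact mul_neg_of_pos_of_neg h hfx
      calc ∑ i ∈ s, a i * f i x2
          < ∑ i ∈ s, (0 : ℝ) := by
            apply Finset.sum_lt_sum h1 ⟨i0, i0.2, h2⟩
        _ = 0 := Finset.sum_const_zero
    rw [hconst x1] at hpos
    rw [hconst x2] at hneg
    linarith
  constructor
  · rw [hcompeq]
    exact himgfin.image _
  · rw [hcompeq]
    calc ((fun B => {y | y ∈ S ∧ σ y = B}) '' (σ '' S)).ncard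
        ≤ (σ '' S).ncard := Set.ncard_image_le himgfin
      _ = 𝒜.card := by rw [h𝒜def, Set.ncard_eq_toFinset_card _ himgfin]
      _ ≤ 𝒜.shatterer.card := Finset.card_le_card_shatterer 𝒜
      _ ≤ ∑ k ∈ Finset.Iic 𝒜.vcDim, (Fintype.card (Fin m)).choose k :=
          Finset.card_shatterer_le_sum_vcDim
      _ ≤ ∑ i ∈ Finset.range (d + 1), m.choose i := by
          simp only [Fintype.card_fin]
          apply Finset.sum_le_sum_of_subset
          intro k hk
          simp only [Finset.mem_Iic] at hk
          simp only [Finset.mem_range]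
          omega
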